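/- arXiv:2202.05787 — 2 statements merged into one kernel-verified Lean document; each statement's English description precedes it below -/
import Mathlib

section
/- There is no one-tape deterministic Turing machine solving the word problem for the free group F₂ on two generators in subquadratic time. Precisely: there is no Turing machine M in Mathlib's one-tape model (Turing.TM0.Machine Γ Λ, where the tape alphabet Γ contains a blank symbol and four distinguished symbols a, b, a⁻¹, b⁻¹, with finite state set Λ and a distinguished set of accepting states), together with a function f : ℕ → ℕ with f(n) = o(n²), such that for every word w (a list over the four symbols a, b, a⁻¹, b⁻¹) of length n, when M is started in its initial state on a tape containing w with the head at the first letter of w (blanks elsewhere), M halts within f(n) steps (i.e. Turing.TM0.step applied iteratively at most f(n) times reaches a configuration on which step returns none), and the halting state is accepting if and only if w represents the identity element of the free group on two generators. -/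
/-- Evaluation of a word over the alphabet `{a, b, a⁻¹, b⁻¹}` (encoded as
`Fin 2 × Bool`) in the free group on two generators. -/
def wordEval (w : List (Fin 2 × Bool)) : FreeGroup (Fin 2) :=
  (w.map fun p => if p.2 then FreeGroup.of p.1 else (FreeGroup.of p.1)⁻¹).prod

/-- Iterate the step function of a one-tape Turing machine `m` times,
starting from configuration `c` (in the `Option` monad). -/
def TMsteps {Γ Λ : Type*} [Inhabited Γ] [Inhabited Λ]
    (M : Turing.TM0.Machine Γ Λ) (m : ℕ) (c : Turing.TM0.Cfg Γ Λ) :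
    Option (Turing.TM0.Cfg Γ Λ) :=
  (fun o => o.bind (Turing.TM0.step M))^[m] (some c)


set_option linter.unusedSectionVars false

namespace NoSubquad

open Turing

variable {Γ Λ : Type} [Inhabited Γ] [Inhabited Λ]

/-- Abstract configuration: state, head position in ℤ, full tape as a function. -/
structure ZC (Γ Λ : Type) where
  q : Λ
  p : ℤ
  T : ℤ → Γ

def dirI : Turing.Dir → ℤ
  | .left => -1
  | .right => 1

variable (M : Turing.TM0.Machine Γ Λ)

def stepZ (z : ZC Γ Λ) : Option (ZC Γ Λ) :=
  match M z.q (z.T z.p) with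
  | none => none
  | some (q', Turing.TM0.Stmt.move d) => some ⟨q', z.p + dirI d, z.T⟩
  | some (q', Turing.TM0.Stmt.write a) => some ⟨q', z.p, Function.update z.T z.p a⟩

def stepT (z : ZC Γ Λ) : ZC Γ Λ := (stepZ M z).getD z

lemma stepZ_none_iff {z : ZC Γ Λ} : stepZ M z = none ↔ M z.q (z.T z.p) = none := by
  unfold stepZ
  rcases h : M z.q (z.T z.p) with _ | ⟨q', s | s⟩ <;> simp [h]

lemma stepZ_inv {z z' : ZC Γ Λ} (h : stepZ M z = some z') :
    (∃ q' d, M z.q (z.T z.p) = some (q', Turing.TM0.Stmt.move d) ∧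
      z' = ⟨q', z.p + dirI d, z.T⟩) ∨
    (∃ q' v, M z.q (z.T z.p) = some (q', Turing.TM0.Stmt.write v) ∧
      z' = ⟨q', z.p, Function.update z.T z.p v⟩) := by
  unfold stepZ at h
  rcases hm : M z.q (z.T z.p) with _ | ⟨q', s | s⟩ <;> rw [hm] at h
  · simp at h
  · exact Or.inl ⟨q', s, rfl, (Option.some_injective _ h).symm⟩
  · exact Or.inr ⟨q', s, rfl, (Option.some_injective _ h).symm⟩

lemma stepZ_move {z : ZC Γ Λ} {q' d} (h : M z.q (z.T z.p) = some (q', Turing.TM0.Stmt.move d)) :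
    stepZ M z = some ⟨q', z.p + dirI d, z.T⟩ := by unfold stepZ; rw [h]

lemma stepZ_write {z : ZC Γ Λ} {q' v} (h : M z.q (z.T z.p) = some (q', Turing.TM0.Stmt.write v)) :
    stepZ M z = some ⟨q', z.p, Function.update z.T z.p v⟩ := by unfold stepZ; rw [h]

/-- The run from `z` halts after exactly `n` applications of the (totalized) step,
with final configuration `f`. -/
def HaltsAt (z : ZC Γ Λ) (n : ℕ) (f : ZC Γ Λ) : Prop :=
  (stepT M)^[n] z = f ∧ stepZ M f = none

lemma stepT_halted {z : ZC Γ Λ} (h : stepZ M z = none) : stepT M z = z := by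
  simp [stepT, h]

lemma iterate_halted {z : ZC Γ Λ} (h : stepZ M z = none) (n : ℕ) : (stepT M)^[n] z = z := by
  induction n with
  | zero => rfl
  | succ n ih => rw [Function.iterate_succ_apply, stepT_halted M h, ih]

lemma halts_of_halted {z f : ZC Γ Λ} {n : ℕ} (hn : HaltsAt M z n f) (h : stepZ M z = none) :
    f = z := by
  rw [← hn.1, iterate_halted M h]

lemma halts_succ {z z' f : ZC Γ Λ} {n : ℕ} (h : stepZ M z = some z')
    (hn : HaltsAt M z (n + 1) f) : HaltsAt M z' n f := by
  refine ⟨?_, hn.2⟩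
  have := hn.1
  rwa [Function.iterate_succ_apply, stepT, h, Option.getD_some] at this

lemma halts_pos {z z' f : ZC Γ Λ} {n : ℕ} (hn : HaltsAt M z n f) (h : stepZ M z = some z') :
    ∃ n', n = n' + 1 := by
  cases n with
  | zero =>
    exfalso
    have : f = z := hn.1.symm
    rw [this] at hn
    rw [hn.2] at h
    exact nomatch h
  | succ n => exact ⟨n, rfl⟩

lemma reaches_iterate {z g : ZC Γ Λ}
    (hr : Relation.ReflTransGen (fun a b => stepZ M a = some b) z g) :
    ∃ k, (stepT M)^[k] z = g := by
  induction hr with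
  | refl => exact ⟨0, rfl⟩
  | tail _ hstep ih =>
    obtain ⟨k, hk⟩ := ih
    refine ⟨k + 1, ?_⟩
    rw [Function.iterate_succ_apply', hk, stepT, hstep, Option.getD_some]

/-- Unique halting configuration. -/
lemma reaches_halt_eq {z g f : ZC Γ Λ} {m : ℕ}
    (hr : Relation.ReflTransGen (fun a b => stepZ M a = some b) z g)
    (hg : stepZ M g = none) (hf : HaltsAt M z m f) : g = f := by
  obtain ⟨k, hk⟩ := reaches_iterate M hr
  rcases le_total k m with h | h
  · have := hf.1
    rw [show m = (m - k) + k by omega, Function.iterate_add_apply, hk] at this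
    rw [← this, iterate_halted M hg]
  · rw [← hk, show k = (k - m) + m by omega, Function.iterate_add_apply, hf.1,
      iterate_halted M hf.2]

end NoSubquad

namespace NoSubquad

variable {Γ Λ : Type} [Inhabited Γ] [Inhabited Λ] (M : Turing.TM0.Machine Γ Λ)

lemma stepZ_pos {z z' : ZC Γ Λ} (h : stepZ M z = some z') :
    z'.p = z.p ∨ z'.p = z.p + 1 ∨ z'.p = z.p - 1 := by
  rcases stepZ_inv M h with ⟨q', d, _, rfl⟩ | ⟨q', v, _, rfl⟩
  · cases d <;> simp [dirI] <;> omega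
  · simp

/-- Crossing sequence at boundary `b` (boundary between cells `b` and `b+1`),
computed with fuel `n`: states just after each head crossing of the boundary. -/
def csF (b : ℤ) : ℕ → ZC Γ Λ → List Λ
  | 0, _ => []
  | n + 1, z =>
    match stepZ M z with
    | none => []
    | some z' => if (z.p ≤ b ↔ z'.p ≤ b) then csF b n z' else z'.q :: csF b n z'

lemma csF_zero (b : ℤ) (z : ZC Γ Λ) : csF M b 0 z = [] := rfl

lemma csF_none {z : ZC Γ Λ} (h : stepZ M z = none) (b : ℤ) (n : ℕ) : csF M b n z = [] := by
  cases n with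
  | zero => rfl
  | succ n => rw [csF, h]

lemma csF_some {z z' : ZC Γ Λ} (h : stepZ M z = some z') (b : ℤ) (n : ℕ) :
    csF M b (n + 1) z =
      if (z.p ≤ b ↔ z'.p ≤ b) then csF M b n z' else z'.q :: csF M b n z' := by
  rw [csF, h]

/-- Fast-forward through the left side until the next crossing (left version). -/
lemma ffl (b : ℤ) : ∀ (n : ℕ) (z : ZC Γ Λ) (f : ZC Γ Λ) (q : Λ) (l : List Λ),
    HaltsAt M z n f → z.p ≤ b → csF M b n z = q :: l →
    ∃ (n' : ℕ) (z' : ZC Γ Λ), n' < n ∧ HaltsAt M z' n' f ∧ z'.p = b + 1 ∧ z'.q = q ∧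
      csF M b n' z' = l ∧ ∀ i, b < i → z'.T i = z.T i := by
  intro n
  induction n with
  | zero => intro z f q l _ _ hcs; exact absurd hcs (by simp [csF_zero])
  | succ n ih =>
    intro z f q l hh hzp hcs
    rcases hs : stepZ M z with _ | z1
    · rw [csF_none M hs] at hcs; exact absurd hcs (by simp)
    have hh1 : HaltsAt M z1 n f := halts_succ M hs hh
    rw [csF_some M hs] at hcs
    by_cases hiff : (z.p ≤ b ↔ z1.p ≤ b)
    · -- no crossing
      rw [if_pos hiff] at hcs
      have hz1p : z1.p ≤ b := hiff.mp hzp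
      obtain ⟨n', z', hlt, hhf, hp, hq, hcs', hT⟩ := ih z1 f q l hh1 hz1p hcs
      refine ⟨n', z', by omega, hhf, hp, hq, hcs', fun i hi => ?_⟩
      rw [hT i hi]
      rcases stepZ_inv M hs with ⟨q', d, _, rfl⟩ | ⟨q', v, _, rfl⟩
      · rfl
      · exact Function.update_of_ne (by omega) _ _
    · -- crossing
      rw [if_neg hiff] at hcs
      have hz1p : ¬ (z1.p ≤ b) := fun h => hiff ⟨fun _ => h, fun _ => hzp⟩
      obtain ⟨hq, hl⟩ : z1.q = q ∧ csF M b n z1 = l := ⟨(List.cons.injEq _ _ _ _ ▸ hcs).1,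
        (List.cons.injEq _ _ _ _ ▸ hcs).2⟩
      rcases stepZ_inv M hs with ⟨q', d, _, rfl⟩ | ⟨q', v, _, rfl⟩
      · refine ⟨n, _, Nat.lt_succ_self n, hh1, ?_, hq, hl, fun i _ => rfl⟩
        simp only at hz1p hzp ⊢
        cases d <;> simp [dirI] at * <;> omega
      · exact absurd hzp hz1p

/-- Fast-forward through the right side until the next crossing (right version). -/
lemma ffr (b : ℤ) : ∀ (n : ℕ) (z : ZC Γ Λ) (f : ZC Γ Λ) (q : Λ) (l : List Λ),
    HaltsAt M z n f → b < z.p → csF M b n z = q :: l →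
    ∃ (n' : ℕ) (z' : ZC Γ Λ), n' < n ∧ HaltsAt M z' n' f ∧ z'.p = b ∧ z'.q = q ∧
      csF M b n' z' = l ∧ ∀ i, i ≤ b → z'.T i = z.T i := by
  intro n
  induction n with
  | zero => intro z f q l _ _ hcs; exact absurd hcs (by simp [csF_zero])
  | succ n ih =>
    intro z f q l hh hzp hcs
    rcases hs : stepZ M z with _ | z1
    · rw [csF_none M hs] at hcs; exact absurd hcs (by simp)
    have hh1 : HaltsAt M z1 n f := halts_succ M hs hh
    rw [csF_some M hs] at hcs
    have hzp' : ¬ (z.p ≤ b) := by omega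
    by_cases hiff : (z.p ≤ b ↔ z1.p ≤ b)
    · -- no crossing
      rw [if_pos hiff] at hcs
      have hz1p : b < z1.p := by
        by_contra h
        exact hzp' (hiff.mpr (by omega))
      obtain ⟨n', z', hlt, hhf, hp, hq, hcs', hT⟩ := ih z1 f q l hh1 hz1p hcs
      refine ⟨n', z', by omega, hhf, hp, hq, hcs', fun i hi => ?_⟩
      rw [hT i hi]
      rcases stepZ_inv M hs with ⟨q', d, _, rfl⟩ | ⟨q', v, _, rfl⟩
      · rfl
      · exact Function.update_of_ne (by omega) _ _
    · -- crossing
      rw [if_neg hiff] at hcs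
      have hz1p : z1.p ≤ b := by
        by_contra h
        exact hiff ⟨fun h' => absurd h' hzp', fun h' => absurd h' h⟩
      obtain ⟨hq, hl⟩ : z1.q = q ∧ csF M b n z1 = l := ⟨(List.cons.injEq _ _ _ _ ▸ hcs).1,
        (List.cons.injEq _ _ _ _ ▸ hcs).2⟩
      rcases stepZ_inv M hs with ⟨q', d, _, rfl⟩ | ⟨q', v, _, rfl⟩
      · refine ⟨n, _, Nat.lt_succ_self n, hh1, ?_, hq, hl, fun i _ => rfl⟩
        simp only at hz1p hzp ⊢
        cases d <;> simp [dirI] at * <;> omega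
      · exact absurd hz1p hzp'

end NoSubquad

namespace NoSubquad

variable {Γ Λ : Type} [Inhabited Γ] [Inhabited Λ] (M : Turing.TM0.Machine Γ Λ)

/-- Merge two tapes at boundary `b`. -/
def mrg (b : ℤ) (TL TR : ℤ → Γ) : ℤ → Γ := fun i => if i ≤ b then TL i else TR i

lemma mrg_left {b : ℤ} {TL TR : ℤ → Γ} {i : ℤ} (h : i ≤ b) : mrg b TL TR i = TL i :=
  if_pos h

lemma mrg_right {b : ℤ} {TL TR : ℤ → Γ} {i : ℤ} (h : ¬ i ≤ b) : mrg b TL TR i = TR i :=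
  if_neg h

lemma mrg_update_left {b : ℤ} {TL TR : ℤ → Γ} {x : ℤ} (h : x ≤ b) (v : Γ) :
    Function.update (mrg b TL TR) x v = mrg b (Function.update TL x v) TR := by
  funext i
  by_cases hix : i = x
  · subst hix; rw [Function.update_self, mrg_left h, Function.update_self]
  · rw [Function.update_of_ne hix]
    unfold mrg
    split
    · rw [Function.update_of_ne hix]
    · rfl

lemma mrg_update_right {b : ℤ} {TL TR : ℤ → Γ} {x : ℤ} (h : ¬ x ≤ b) (v : Γ) :
    Function.update (mrg b TL TR) x v = mrg b TL (Function.update TR x v) := by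
  funext i
  by_cases hix : i = x
  · subst hix; rw [Function.update_self, mrg_right h, Function.update_self]
  · rw [Function.update_of_ne hix]
    unfold mrg
    split
    · rfl
    · rw [Function.update_of_ne hix]

/-- The cut-and-paste (splicing) theorem for crossing sequences. -/
theorem splice (b : ℤ) (N : ℕ) : ∀ (nA nB : ℕ) (a zb fA fB : ZC Γ Λ),
    nA + nB ≤ N →
    HaltsAt M a nA fA → HaltsAt M zb nB fB →
    csF M b nA a = csF M b nB zb →
    ((a.p ≤ b → zb.p ≤ b →
      ∃ g, Relation.ReflTransGen (fun u v => stepZ M u = some v)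
          ⟨a.q, a.p, mrg b a.T zb.T⟩ g ∧ stepZ M g = none ∧
        (g.q = fA.q ∨ g.q = fB.q)) ∧
     (b < a.p → b < zb.p →
      ∃ g, Relation.ReflTransGen (fun u v => stepZ M u = some v)
          ⟨zb.q, zb.p, mrg b a.T zb.T⟩ g ∧ stepZ M g = none ∧
        (g.q = fA.q ∨ g.q = fB.q))) := by
  induction N with
  | zero =>
    intro nA nB a zb fA fB hN hA hB _
    have hnA : nA = 0 := by omega
    have hnB : nB = 0 := by omega
    subst hnA hnB
    have hfA : fA = a := hA.1.symm
    have hfB : fB = zb := hB.1.symm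
    constructor
    · intro hap hbp
      refine ⟨⟨a.q, a.p, mrg b a.T zb.T⟩, Relation.ReflTransGen.refl, ?_, Or.inl (by rw [hfA])⟩
      rw [stepZ_none_iff]
      show M a.q (mrg b a.T zb.T a.p) = none
      rw [mrg_left hap]
      exact (stepZ_none_iff M).mp (hfA ▸ hA.2)
    · intro hap hbp
      refine ⟨⟨zb.q, zb.p, mrg b a.T zb.T⟩, Relation.ReflTransGen.refl, ?_, Or.inr (by rw [hfB])⟩
      rw [stepZ_none_iff]
      show M zb.q (mrg b a.T zb.T zb.p) = none
      rw [mrg_right (by omega)]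
      exact (stepZ_none_iff M).mp (hfB ▸ hB.2)
  | succ N IH =>
    intro nA nB a zb fA fB hN hA hB hcs
    constructor
    · -- mode Left : active run is A
      intro hap hbp
      rcases hsa : stepZ M a with _ | a1
      · -- A halts here
        have hfA : fA = a := halts_of_halted M hA hsa
        refine ⟨⟨a.q, a.p, mrg b a.T zb.T⟩, Relation.ReflTransGen.refl, ?_, Or.inl (by rw [hfA])⟩
        rw [stepZ_none_iff]
        show M a.q (mrg b a.T zb.T a.p) = none
        rw [mrg_left hap]
        exact (stepZ_none_iff M).mp hsa
      · obtain ⟨nA', rfl⟩ := halts_pos M hA hsa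
        have hA1 : HaltsAt M a1 nA' fA := halts_succ M hsa hA
        rw [csF_some M hsa] at hcs
        rcases stepZ_inv M hsa with ⟨q', d, hM, rfl⟩ | ⟨q', v, hM, rfl⟩
        · -- move
          dsimp only at hcs hA1 ⊢
          have hMc : M a.q (mrg b a.T zb.T a.p) = some (q', Turing.TM0.Stmt.move d) := by
            rw [mrg_left hap]; exact hM
          have hstepc : stepZ M ⟨a.q, a.p, mrg b a.T zb.T⟩ =
              some ⟨q', a.p + dirI d, mrg b a.T zb.T⟩ := stepZ_move M hMc
          by_cases hside : a.p + dirI d ≤ b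
          · -- no crossing
            rw [if_pos (by (try dsimp only); exact ⟨fun _ => hside, fun _ => hap⟩)] at hcs
            have := (IH nA' nB ⟨q', a.p + dirI d, a.T⟩ zb fA fB (by omega) hA1 hB hcs).1
              hside hbp
            obtain ⟨g, hg1, hg2, hg3⟩ := this
            exact ⟨g, Relation.ReflTransGen.head hstepc hg1, hg2, hg3⟩
          · -- crossing: A moves from b to b+1
            have hd : dirI d = 1 ∧ a.p = b := by cases d <;> simp [dirI] at hside ⊢ <;> omega
            rw [if_neg (by (try dsimp only); exact fun hiff => hside (hiff.mp hap))] at hcs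
            obtain ⟨nB', zb', hlt, hB', hp', hq', hcs', hT'⟩ :=
              ffl M b nB zb fB q' (csF M b nA' ⟨q', a.p + dirI d, a.T⟩) hB hbp hcs.symm
            have := (IH nA' nB' ⟨q', a.p + dirI d, a.T⟩ zb' fA fB (by omega) hA1 hB'
              hcs'.symm).2 (by (try dsimp only); omega) (by rw [hp']; omega)
            obtain ⟨g, hg1, hg2, hg3⟩ := this
            refine ⟨g, Relation.ReflTransGen.head hstepc ?_, hg2, hg3⟩
            have heq : (⟨zb'.q, zb'.p, mrg b (⟨q', a.p + dirI d, a.T⟩ : ZC Γ Λ).T zb'.T⟩ : ZC Γ Λ)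
                = ⟨q', a.p + dirI d, mrg b a.T zb.T⟩ := by
              have h3 : mrg b a.T zb'.T = mrg b a.T zb.T := by
                funext i
                unfold mrg
                split
                · rfl
                · exact hT' i (by omega)
              rw [hq', hp', hd.1, hd.2, h3]
            rwa [heq] at hg1
        · -- write
          dsimp only at hcs hA1 ⊢
          have hMc : M a.q (mrg b a.T zb.T a.p) = some (q', Turing.TM0.Stmt.write v) := by
            rw [mrg_left hap]; exact hM
          have hstepc : stepZ M ⟨a.q, a.p, mrg b a.T zb.T⟩ =
              some ⟨q', a.p, Function.update (mrg b a.T zb.T) a.p v⟩ := stepZ_write M hMc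
          rw [if_pos (by (try dsimp only); exact Iff.rfl)] at hcs
          have := (IH nA' nB ⟨q', a.p, Function.update a.T a.p v⟩ zb fA fB (by omega)
            hA1 hB hcs).1 hap hbp
          obtain ⟨g, hg1, hg2, hg3⟩ := this
          refine ⟨g, Relation.ReflTransGen.head hstepc ?_, hg2, hg3⟩
          rwa [show (⟨q', a.p, Function.update (mrg b a.T zb.T) a.p v⟩ : ZC Γ Λ) =
            ⟨q', a.p, mrg b (Function.update a.T a.p v) zb.T⟩ by rw [mrg_update_left hap]]
    · -- mode Right : active run is B
      intro hap hbp
      rcases hsb : stepZ M zb with _ | zb1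
      · have hfB : fB = zb := halts_of_halted M hB hsb
        refine ⟨⟨zb.q, zb.p, mrg b a.T zb.T⟩, Relation.ReflTransGen.refl, ?_, Or.inr (by rw [hfB])⟩
        rw [stepZ_none_iff]
        show M zb.q (mrg b a.T zb.T zb.p) = none
        rw [mrg_right (by omega)]
        exact (stepZ_none_iff M).mp hsb
      · obtain ⟨nB', rfl⟩ := halts_pos M hB hsb
        have hB1 : HaltsAt M zb1 nB' fB := halts_succ M hsb hB
        rw [csF_some M hsb] at hcs
        rcases stepZ_inv M hsb with ⟨q', d, hM, rfl⟩ | ⟨q', v, hM, rfl⟩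
        · -- move
          dsimp only at hcs hB1 ⊢
          have hMc : M zb.q (mrg b a.T zb.T zb.p) = some (q', Turing.TM0.Stmt.move d) := by
            rw [mrg_right (by omega)]; exact hM
          have hstepc : stepZ M ⟨zb.q, zb.p, mrg b a.T zb.T⟩ =
              some ⟨q', zb.p + dirI d, mrg b a.T zb.T⟩ := stepZ_move M hMc
          by_cases hside : zb.p + dirI d ≤ b
          · -- crossing: B moves from b+1 to b
            have hd : dirI d = -1 ∧ zb.p = b + 1 := by
              cases d <;> simp [dirI] at hside ⊢ <;> omega
            rw [if_neg (by (try dsimp only); exact fun hiff => absurd (hiff.mpr hside) (by omega))]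
              at hcs
            obtain ⟨nA', a', hlt, hA', hp', hq', hcs', hT'⟩ :=
              ffr M b nA a fA q' (csF M b nB' ⟨q', zb.p + dirI d, zb.T⟩) hA (by omega) hcs
            have := (IH nA' nB' a' ⟨q', zb.p + dirI d, zb.T⟩ fA fB (by omega) hA' hB1
              hcs').1 (by rw [hp']) (by (try dsimp only); omega)
            obtain ⟨g, hg1, hg2, hg3⟩ := this
            refine ⟨g, Relation.ReflTransGen.head hstepc ?_, hg2, hg3⟩
            have heq : (⟨a'.q, a'.p, mrg b a'.T (⟨q', zb.p + dirI d, zb.T⟩ : ZC Γ Λ).T⟩ : ZC Γ Λ)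
                = ⟨q', zb.p + dirI d, mrg b a.T zb.T⟩ := by
              have h3 : mrg b a'.T zb.T = mrg b a.T zb.T := by
                funext i
                unfold mrg
                split
                · exact hT' i (by omega)
                · rfl
              rw [hq', hp', hd.1, hd.2, h3]
              norm_num
            rwa [heq] at hg1
          · -- no crossing
            rw [if_pos (by (try dsimp only); constructor <;> intro h <;> omega)] at hcs
            have := (IH nA nB' a ⟨q', zb.p + dirI d, zb.T⟩ fA fB (by omega) hA hB1 hcs).2
              hap (by (try dsimp only); omega)
            obtain ⟨g, hg1, hg2, hg3⟩ := this
            exact ⟨g, Relation.ReflTransGen.head hstepc hg1, hg2, hg3⟩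
        · -- write
          dsimp only at hcs hB1 ⊢
          have hMc : M zb.q (mrg b a.T zb.T zb.p) = some (q', Turing.TM0.Stmt.write v) := by
            rw [mrg_right (by omega)]; exact hM
          have hstepc : stepZ M ⟨zb.q, zb.p, mrg b a.T zb.T⟩ =
              some ⟨q', zb.p, Function.update (mrg b a.T zb.T) zb.p v⟩ := stepZ_write M hMc
          rw [if_pos (by (try dsimp only); exact Iff.rfl)] at hcs
          have := (IH nA nB' a ⟨q', zb.p, Function.update zb.T zb.p v⟩ fA fB (by omega)
            hA hB1 hcs).2 hap hbp
          obtain ⟨g, hg1, hg2, hg3⟩ := this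
          refine ⟨g, Relation.ReflTransGen.head hstepc ?_, hg2, hg3⟩
          rwa [show (⟨q', zb.p, Function.update (mrg b a.T zb.T) zb.p v⟩ : ZC Γ Λ) =
            ⟨q', zb.p, mrg b a.T (Function.update zb.T zb.p v)⟩ by rw [mrg_update_right (by omega)]]

end NoSubquad

namespace NoSubquad

open Turing

variable {Γ Λ : Type} [Inhabited Γ] [Inhabited Λ] (M : Turing.TM0.Machine Γ Λ)

/-- Each step crosses at most one boundary, so the total length of all crossing
sequences over a finite set of boundaries is at most the running time. -/
lemma csF_len_sum (S : Finset ℤ) : ∀ (n : ℕ) (z : ZC Γ Λ),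
    (∑ b ∈ S, (csF M b n z).length) ≤ n := by
  intro n
  induction n with
  | zero => intro z; simp [csF_zero]
  | succ n ih =>
    intro z
    rcases hs : stepZ M z with _ | z'
    · simp [csF_none M hs]
    · have hb0 : ∀ b : ℤ, ¬ (z.p ≤ b ↔ z'.p ≤ b) → b = min z.p z'.p := by
        intro b hb
        rcases stepZ_pos M hs with h | h | h <;> omega
      calc ∑ b ∈ S, (csF M b (n + 1) z).length
          ≤ ∑ b ∈ S, ((if b = min z.p z'.p then 1 else 0) + (csF M b n z').length) := by
            apply Finset.sum_le_sum
            intro b _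
            rw [csF_some M hs]
            split
            · split <;> simp
            · rw [if_pos (hb0 b (by assumption))]
              simp only [List.length_cons]
              omega
        _ = (∑ b ∈ S, if b = min z.p z'.p then 1 else 0) + ∑ b ∈ S, (csF M b n z').length := by
            rw [Finset.sum_add_distrib]
        _ ≤ 1 + n := by
            have h1 : (∑ b ∈ S, if b = min z.p z'.p then 1 else 0) ≤ 1 := by
              rw [Finset.sum_ite_eq' S (min z.p z'.p) (fun _ => 1)]
              split <;> simp
            exact Nat.add_le_add h1 (ih z')
        _ = n + 1 := by omega

/-! ### Bridge between `Turing.TM0` configurations and `ZC` configurations -/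

/-- Correspondence between a TM0 configuration and an abstract configuration. -/
def Rel (c : Turing.TM0.Cfg Γ Λ) (z : ZC Γ Λ) : Prop :=
  c.q = z.q ∧ ∀ j : ℤ, c.Tape.nth j = z.T (z.p + j)

lemma rel_step {c : Turing.TM0.Cfg Γ Λ} {z : ZC Γ Λ} (h : Rel c z) :
    (Turing.TM0.step M c = none ∧ stepZ M z = none) ∨
    (∃ c' z', Turing.TM0.step M c = some c' ∧ stepZ M z = some z' ∧ Rel c' z') := by
  obtain ⟨hq, hT⟩ := h
  obtain ⟨q, T⟩ := c
  have hhead : T.1 = z.T z.p := by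
    have := hT 0
    rwa [Tape.nth_zero, add_zero] at this
  dsimp only at hq hT hhead
  subst hq
  rcases hM : M z.q (z.T z.p) with _ | ⟨q', s | s⟩
  · left
    constructor
    · show (M z.q T.1).map _ = none
      rw [hhead, hM]; rfl
    · rw [stepZ_none_iff]; exact hM
  · -- move
    right
    refine ⟨⟨q', T.move s⟩, ⟨q', z.p + dirI s, z.T⟩, ?_, stepZ_move M hM, rfl, ?_⟩
    · show (M z.q T.1).map _ = _
      rw [hhead, hM]; rfl
    · intro j
      dsimp only
      cases s
      · rw [Tape.move_left_nth, hT (j - 1)]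
        congr 1
        simp only [dirI]
        ring
      · rw [Tape.move_right_nth, hT (j + 1)]
        congr 1
        simp only [dirI]
        ring
  · -- write
    right
    refine ⟨⟨q', T.write s⟩, ⟨q', z.p, Function.update z.T z.p s⟩, ?_, stepZ_write M hM, rfl, ?_⟩
    · show (M z.q T.1).map _ = _
      rw [hhead, hM]; rfl
    · intro j
      rw [Tape.write_nth]
      dsimp only
      rcases eq_or_ne j 0 with rfl | hj
      · rw [if_pos rfl, add_zero, Function.update_self]
      · rw [if_neg hj, Function.update_of_ne (by omega), hT]

lemma tmsteps_none (M' : Turing.TM0.Machine Γ Λ) (m : ℕ) :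
    (fun o => o.bind (Turing.TM0.step M'))^[m] none = none := by
  induction m with
  | zero => rfl
  | succ m ih => rw [Function.iterate_succ_apply, Option.bind]; exact ih

lemma tmsteps_sim : ∀ (m : ℕ) (c0 : Turing.TM0.Cfg Γ Λ) (z0 : ZC Γ Λ)
    (c : Turing.TM0.Cfg Γ Λ), Rel c0 z0 →
    (fun o => o.bind (Turing.TM0.step M))^[m] (some c0) = some c →
    Rel c ((stepT M)^[m] z0) := by
  intro m
  induction m with
  | zero =>
    intro c0 z0 c h0 hs
    cases hs
    exact h0
  | succ m ih =>
    intro c0 z0 c h0 hs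
    rw [Function.iterate_succ_apply] at hs
    rcases rel_step M h0 with ⟨h1, _⟩ | ⟨c1, z1, h1, h2, h3⟩
    · rw [show (some c0).bind (Turing.TM0.step M) = none by simp [h1], tmsteps_none] at hs
      exact nomatch hs
    · rw [show (some c0).bind (Turing.TM0.step M) = some c1 by simp [h1]] at hs
      have := ih c1 z1 c h3 hs
      rwa [Function.iterate_succ_apply, stepT, h2, Option.getD_some]

end NoSubquad

namespace NoSubquad

open Turing

variable {Γ Λ : Type} [Inhabited Γ] [Inhabited Λ]

/-- The abstract tape holding a list starting at position `0`. -/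
def ztape (l : List Γ) : ℤ → Γ := fun i => if 0 ≤ i then l.getD i.toNat default else default

lemma rel_init (l : List Γ) :
    Rel (Turing.TM0.init l : Turing.TM0.Cfg Γ Λ) ⟨default, 0, ztape l⟩ := by
  refine ⟨rfl, fun j => ?_⟩
  show (Tape.mk₁ l).nth j = ztape l (0 + j)
  rw [zero_add]
  unfold Tape.mk₁ Tape.mk₂ ztape
  rcases j with n | n
  · rw [show (Int.ofNat n) = (n : ℤ) from rfl, Tape.mk'_nth_nat, ListBlank.nth_mk,
      if_pos (by omega), ← List.getD_default_eq_getI]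
    congr 1
  · rw [if_neg (by simp)]
    have hrfl : (Tape.mk' (ListBlank.mk []) (ListBlank.mk l) : Tape Γ).nth (Int.negSucc n) =
        (ListBlank.mk ([] : List Γ)).nth n := rfl
    rw [hrfl, ListBlank.nth_mk]
    simp [List.getI_eq_default]

/-! ### The words used in the adversarial argument -/

def posW (n : ℕ) (x : Fin n → Fin 2) : List (Fin 2 × Bool) :=
  (List.ofFn x).map fun i => (i, true)

def midW (n : ℕ) : List (Fin 2 × Bool) :=
  List.replicate n ((0 : Fin 2), true) ++ List.replicate n ((0 : Fin 2), false)

def wrd (n : ℕ) (x y : Fin n → Fin 2) : List (Fin 2 × Bool) :=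
  (posW n x ++ midW n) ++ FreeGroup.invRev (posW n y)

lemma posW_length (n : ℕ) (x : Fin n → Fin 2) : (posW n x).length = n := by
  simp [posW]

lemma midW_length (n : ℕ) : (midW n).length = 2 * n := by
  simp [midW]; omega

lemma wrd_length (n : ℕ) (x y : Fin n → Fin 2) : (wrd n x y).length = 4 * n := by
  simp [wrd, FreeGroup.invRev, posW_length, midW_length]
  omega

lemma wordEval_mk (w : List (Fin 2 × Bool)) : wordEval w = FreeGroup.mk w := by
  induction w with
  | nil => simp [wordEval, FreeGroup.one_eq_mk.symm]
  | cons p w ih =>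
    have : wordEval (p :: w) = (if p.2 then FreeGroup.of p.1 else (FreeGroup.of p.1)⁻¹) *
        wordEval w := by
      simp [wordEval]
    rw [this, ih, show (p :: w) = [p] ++ w from rfl, ← FreeGroup.mul_mk]
    congr 1
    rcases p with ⟨i, _ | _⟩
    · show (FreeGroup.of i)⁻¹ = _
      rw [FreeGroup.of, FreeGroup.inv_mk]
      congr 1
    · rfl

lemma wordEval_append (u v : List (Fin 2 × Bool)) :
    wordEval (u ++ v) = wordEval u * wordEval v := by
  rw [wordEval_mk, wordEval_mk, wordEval_mk, FreeGroup.mul_mk]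

lemma wordEval_invRev (w : List (Fin 2 × Bool)) :
    wordEval (FreeGroup.invRev w) = (wordEval w)⁻¹ := by
  rw [wordEval_mk, wordEval_mk, ← FreeGroup.inv_mk]

lemma midW_eval (n : ℕ) : wordEval (midW n) = 1 := by
  have h : List.replicate n ((0 : Fin 2), false) =
      FreeGroup.invRev (List.replicate n ((0 : Fin 2), true)) := by
    simp [FreeGroup.invRev]
  rw [midW, h, wordEval_append, wordEval_invRev, mul_inv_cancel]

lemma wrd_eval (n : ℕ) (x y : Fin n → Fin 2) :
    wordEval (wrd n x y) = wordEval (posW n x) * (wordEval (posW n y))⁻¹ := by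
  rw [wrd, wordEval_append, wordEval_append, midW_eval, mul_one, wordEval_invRev]

lemma reduce_posW (l : List (Fin 2)) :
    FreeGroup.reduce (l.map fun i => (i, true)) = l.map fun i => (i, true) := by
  induction l with
  | nil => rfl
  | cons a l ih =>
    rw [List.map_cons, FreeGroup.reduce.cons, ih]
    cases l with
    | nil => rfl
    | cons b l => simp

lemma posW_eval_inj {n : ℕ} {x y : Fin n → Fin 2}
    (h : wordEval (posW n x) = wordEval (posW n y)) : x = y := by
  rw [wordEval_mk, wordEval_mk] at h
  have h2 := congrArg FreeGroup.toWord h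
  rw [FreeGroup.toWord_mk, FreeGroup.toWord_mk, posW, posW, reduce_posW, reduce_posW] at h2
  have h3 : List.ofFn x = List.ofFn y := by
    have : Function.Injective (fun i : Fin 2 => (i, true)) := fun a b hab => by
      simpa using hab
    exact List.map_injective_iff.mpr this h2
  rwa [List.ofFn_inj] at h3

lemma wrd_eval_one_iff (n : ℕ) (x y : Fin n → Fin 2) :
    wordEval (wrd n x y) = 1 ↔ x = y := by
  rw [wrd_eval, mul_inv_eq_one]
  exact ⟨fun h => posW_eval_inj h, fun h => by rw [h]⟩

/-! ### Tape agreement lemmas -/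

lemma ztape_agree_left {n : ℕ} {x y : Fin n → Fin 2} (enc : Fin 2 × Bool → Γ)
    {b i : ℤ} (hb : b < 3 * n) (hi : i ≤ b) :
    ztape ((wrd n x y).map enc) i = ztape ((wrd n x x).map enc) i := by
  unfold ztape
  split
  · next h0 =>
    have hk : i.toNat < ((posW n x).map enc ++ (midW n).map enc).length := by
      simp only [List.length_map, List.length_append, posW_length, midW_length]
      omega
    have hL1 : (wrd n x y).map enc = ((posW n x).map enc ++ (midW n).map enc) ++
        (FreeGroup.invRev (posW n y)).map enc := by simp [wrd]
    have hL2 : (wrd n x x).map enc = ((posW n x).map enc ++ (midW n).map enc) ++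
        (FreeGroup.invRev (posW n x)).map enc := by simp [wrd]
    rw [hL1, hL2, List.getD_append _ _ _ _ hk, List.getD_append _ _ _ _ hk]
  · rfl

lemma ztape_agree_right {n : ℕ} {x y : Fin n → Fin 2} (enc : Fin 2 × Bool → Γ)
    {b i : ℤ} (hb : (n : ℤ) ≤ b) (hi : b < i) :
    ztape ((wrd n x y).map enc) i = ztape ((wrd n y y).map enc) i := by
  unfold ztape
  split
  · next h0 =>
    have hk : ((posW n x).map enc).length ≤ i.toNat := by
      simp only [List.length_map, posW_length]
      omega
    have hk' : ((posW n y).map enc).length ≤ i.toNat := by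
      simp only [List.length_map, posW_length]
      omega
    have hL1 : (wrd n x y).map enc = (posW n x).map enc ++
        ((midW n).map enc ++ (FreeGroup.invRev (posW n y)).map enc) := by simp [wrd]
    have hL2 : (wrd n y y).map enc = (posW n y).map enc ++
        ((midW n).map enc ++ (FreeGroup.invRev (posW n y)).map enc) := by simp [wrd]
    rw [hL1, hL2, List.getD_append_right _ _ _ _ hk, List.getD_append_right _ _ _ _ hk']
    simp only [List.length_map, posW_length]
  · rfl

/-! ### Elementary growth lemmas -/

lemma sq_le_two_pow : ∀ t : ℕ, 4 ≤ t → t * t ≤ 2 ^ t := by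
  intro t
  induction t with
  | zero => omega
  | succ t ih =>
    intro ht
    rcases Nat.lt_or_ge t 4 with h | h
    · interval_cases t <;> first | omega | norm_num
    · have h1 := ih h
      have h2 : 2 * t + 1 ≤ t * t := by nlinarith
      have : (t + 1) * (t + 1) ≤ 2 * (t * t) := by nlinarith
      calc (t + 1) * (t + 1) ≤ 2 * (t * t) := this
        _ ≤ 2 * 2 ^ t := by omega
        _ = 2 ^ (t + 1) := by ring

lemma lin_lt_two_pow_half (c : ℕ) : ∀ n : ℕ, 6 * c + 12 ≤ n → c * n < 2 ^ (n / 2) := by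
  intro n hn
  set t := n / 2 with ht
  have h1 : 3 * c + 6 ≤ t := by omega
  have h2 : n ≤ 2 * t + 1 := by omega
  have h4 : 4 ≤ t := by omega
  have hsq := sq_le_two_pow t h4
  have : c * n < t * t := by nlinarith
  omega

end NoSubquad

namespace NoSubquad

/-- Initial abstract configuration for the word `wrd n x y`. -/
def ziC {Γ Λ : Type} [Inhabited Γ] [Inhabited Λ] (enc : Fin 2 × Bool → Γ) (n : ℕ)
    (x y : Fin n → Fin 2) : ZC Γ Λ :=
  ⟨default, 0, ztape ((wrd n x y).map enc)⟩

end NoSubquad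

open NoSubquad in
theorem no_subquadratic_word_problem' :
    ¬ ∃ (Γ Λ : Type) (_ : Inhabited Γ) (_ : Inhabited Λ) (_ : Fintype Λ)
      (enc : Fin 2 × Bool → Γ) (M : Turing.TM0.Machine Γ Λ) (Acc : Set Λ)
      (f : ℕ → ℕ),
      Function.Injective enc ∧ (∀ x, enc x ≠ default) ∧
      (∀ ε : ℝ, 0 < ε → ∃ N : ℕ, ∀ n ≥ N, (f n : ℝ) ≤ ε * (n : ℝ) ^ 2) ∧
      (∀ w : List (Fin 2 × Bool),
        ∃ m ≤ f w.length, ∃ c : Turing.TM0.Cfg Γ Λ,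
          TMsteps M m (Turing.TM0.init (w.map enc)) = some c ∧
          Turing.TM0.step M c = none ∧
          (c.q ∈ Acc ↔ wordEval w = 1)) := by
  rintro ⟨Γ, Λ, hΓ, hΛ, hFin, enc, M, Acc, f, -, -, hsub, hspec⟩
  classical
  set K : ℕ := Fintype.card Λ + 2 with hK
  obtain ⟨N₀, hN₀⟩ := hsub ((16 * K : ℝ))⁻¹ (by positivity)
  set n : ℕ := N₀ + (6 * (2 * K) + 12) + 1 with hn
  have hn1 : 1 ≤ n := by omega
  have hnN₀ : 4 * n ≥ N₀ := by omega
  have hngrow : 6 * (2 * K) + 12 ≤ n := by omega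
  -- Bridge the machine specification to the abstract semantics.
  have hrun : ∀ x y : Fin n → Fin 2, ∃ (m : ℕ) (g : ZC Γ Λ), m ≤ f (4 * n) ∧
      HaltsAt M (ziC enc n x y) m g ∧ (g.q ∈ Acc ↔ wordEval (wrd n x y) = 1) := by
    intro x y
    obtain ⟨m, hm, c, h1, h2, h3⟩ := hspec (wrd n x y)
    rw [wrd_length] at hm
    have hrel := tmsteps_sim M m _ (ziC enc n x y) c (rel_init _) h1
    refine ⟨m, (stepT M)^[m] (ziC enc n x y), hm, ⟨rfl, ?_⟩, ?_⟩
    · rcases rel_step M hrel with ⟨_, h⟩ | ⟨c', z', hc', _, _⟩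
      · exact h
      · rw [h2] at hc'; exact nomatch hc'
    · rw [← hrel.1]
      exact h3
  choose mm fz hmle hHalt hAccIff using hrun
  have hAccD : ∀ x, (fz x x).q ∈ Acc := fun x =>
    (hAccIff x x).mpr ((wrd_eval_one_iff n x x).mpr rfl)
  -- Choose a middle boundary with a short crossing sequence.
  have hbdry : ∀ x : Fin n → Fin 2, ∃ b ∈ Finset.Ico (n : ℤ) (3 * n),
      2 * n * (csF M b (mm x x) (ziC enc n x x)).length ≤ mm x x := by
    intro x
    by_contra hcon
    push_neg at hcon
    have hcard : (Finset.Ico (n : ℤ) (3 * n)).card = 2 * n := by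
      rw [Int.card_Ico]; omega
    have hsum := csF_len_sum M (Finset.Ico (n : ℤ) (3 * n)) (mm x x) (ziC enc n x x)
    have h2n : 0 < 2 * n := by omega
    have hlow : ∀ b ∈ Finset.Ico (n : ℤ) (3 * n),
        mm x x / (2 * n) + 1 ≤ (csF M b (mm x x) (ziC enc n x x)).length := by
      intro b hb
      have h := hcon b hb
      have h' : mm x x < (csF M b (mm x x) (ziC enc n x x)).length * (2 * n) := by
        rw [mul_comm]; exact h
      have := (Nat.div_lt_iff_lt_mul h2n).mpr h'
      omega
    have hns := Finset.card_nsmul_le_sum (Finset.Ico (n : ℤ) (3 * n)) _ _ hlow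
    rw [hcard, smul_eq_mul] at hns
    have hdm := Nat.div_add_mod (mm x x) (2 * n)
    have hmod := Nat.mod_lt (mm x x) h2n
    have hexp : 2 * n * (mm x x / (2 * n) + 1) = 2 * n * (mm x x / (2 * n)) + 2 * n := by ring
    rw [hexp] at hns
    generalize 2 * n * (mm x x / (2 * n)) = E at hns hdm
    omega
  choose bx hbxmem hbxlen using hbdry
  -- Uniform bound on the crossing-sequence length.
  have hmK : ∀ x, mm x x * K ≤ n * n := by
    intro x
    have h1 := hN₀ (4 * n) hnN₀
    have h2 : ((mm x x : ℕ) : ℝ) ≤ (f (4 * n) : ℝ) := Nat.cast_le.mpr (hmle x x)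
    have hKR : (0 : ℝ) < (K : ℝ) := by positivity
    have h3 : ((16 * (K : ℝ)))⁻¹ * ((4 * n : ℕ) : ℝ) ^ 2 = (n : ℝ) * n / K := by
      push_cast
      field_simp
      ring
    rw [h3] at h1
    have h5 : (mm x x : ℝ) ≤ (n : ℝ) * n / K := le_trans h2 h1
    have h4 : (mm x x : ℝ) * K ≤ (n : ℝ) * n := (le_div_iff₀ hKR).mp h5
    exact_mod_cast h4
  set Lb := n / (2 * K) with hLb
  have hlenb : ∀ x, (csF M (bx x) (mm x x) (ziC enc n x x)).length ≤ Lb := by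
    intro x
    have h1 := hbxlen x
    have h2 := hmK x
    set len := (csF M (bx x) (mm x x) (ziC enc n x x)).length
    have h3 : n * (2 * K * len) ≤ n * n := by nlinarith
    have h4 : 2 * K * len ≤ n := Nat.le_of_mul_le_mul_left h3 (by omega)
    rw [hLb, Nat.le_div_iff_mul_le (by omega : 0 < 2 * K)]
    calc len * (2 * K) = 2 * K * len := by ring
      _ ≤ n := h4
  -- Pigeonhole on fingerprints.
  let Fp : (Fin n → Fin 2) → ((Finset.Ico (n : ℤ) (3 * n)) × (Fin (Lb + 1) → Option Λ)) :=
    fun x => (⟨bx x, hbxmem x⟩, fun i => (csF M (bx x) (mm x x) (ziC enc n x x))[(i : ℕ)]?)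
  have hKLb : K * Lb ≤ n / 2 := by
    have h1 : Lb * (2 * K) ≤ n := Nat.div_mul_le_self n (2 * K)
    rw [Nat.le_div_iff_mul_le (by norm_num : 0 < 2)]
    calc K * Lb * 2 = Lb * (2 * K) := by ring
      _ ≤ n := h1
  have hcardlt : Fintype.card ((Finset.Ico (n : ℤ) (3 * n)) × (Fin (Lb + 1) → Option Λ)) <
      Fintype.card (Fin n → Fin 2) := by
    rw [Fintype.card_prod, Fintype.card_coe, Fintype.card_fun, Fintype.card_fun,
      Fintype.card_option, Fintype.card_fin, Fintype.card_fin, Fintype.card_fin,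
      Int.card_Ico]
    have hIc : (3 * (n : ℤ) - n).toNat = 2 * n := by omega
    rw [hIc]
    calc 2 * n * (Fintype.card Λ + 1) ^ (Lb + 1)
        ≤ 2 * n * K ^ (Lb + 1) := by
          have := Nat.pow_le_pow_left (show Fintype.card Λ + 1 ≤ K by omega) (Lb + 1)
          exact Nat.mul_le_mul_left _ this
      _ = 2 * K * n * K ^ Lb := by ring
      _ ≤ 2 * K * n * (2 ^ K) ^ Lb := by
          have hK2 : K ≤ 2 ^ K := (Nat.lt_two_pow_self (n := K)).le
          exact Nat.mul_le_mul_left _ (Nat.pow_le_pow_left hK2 _)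
      _ = 2 * K * n * 2 ^ (K * Lb) := by rw [← pow_mul]
      _ ≤ 2 * K * n * 2 ^ (n / 2) := by
          exact Nat.mul_le_mul_left _ (Nat.pow_le_pow_right (by norm_num) hKLb)
      _ < 2 ^ (n / 2) * 2 ^ (n / 2) := by
          have h2 : 2 * K * n < 2 ^ (n / 2) := lin_lt_two_pow_half (2 * K) n hngrow
          exact (Nat.mul_lt_mul_right (by positivity : 0 < 2 ^ (n / 2))).mpr h2
      _ = 2 ^ (n / 2 + n / 2) := (pow_add 2 _ _).symm
      _ ≤ 2 ^ n := Nat.pow_le_pow_right (by norm_num) (by omega)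
  obtain ⟨x, y, hxy, hFeq⟩ := Fintype.exists_ne_map_eq_of_card_lt Fp hcardlt
  have hbxy : bx x = bx y := by
    have := congrArg (fun p => (p.1 : ℤ)) hFeq
    simpa [Fp] using this
  have hcseq : csF M (bx x) (mm x x) (ziC enc n x x) =
      csF M (bx x) (mm y y) (ziC enc n y y) := by
    have h2 := congrArg Prod.snd hFeq
    simp only [Fp] at h2
    apply List.ext_getElem?
    intro i
    rcases Nat.lt_or_ge i (Lb + 1) with hi | hi
    · have h3 := congrFun h2 ⟨i, hi⟩
      simpa [hbxy] using h3
    · rw [List.getElem?_eq_none (by have := hlenb x; omega),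
        List.getElem?_eq_none (by have hy := hlenb y; rw [← hbxy] at hy; omega)]
  -- Apply the splice theorem.
  have hbmem := hbxmem x
  rw [Finset.mem_Ico] at hbmem
  have hsp := (splice M (bx x) (mm x x + mm y y) (mm x x) (mm y y)
      (ziC enc n x x) (ziC enc n y y) (fz x x) (fz y y) le_rfl
      (hHalt x x) (hHalt y y) hcseq).1
      (by show (0 : ℤ) ≤ bx x; omega) (by show (0 : ℤ) ≤ bx x; omega)
  obtain ⟨g, hg1, hg2, hg3⟩ := hsp
  have hgAcc : g.q ∈ Acc := by
    rcases hg3 with h | h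
    · rw [h]; exact hAccD x
    · rw [h]; exact hAccD y
  have hmerge : (⟨(ziC enc n x x : ZC Γ Λ).q, (ziC enc n x x : ZC Γ Λ).p,
      mrg (bx x) (ziC enc n x x : ZC Γ Λ).T (ziC enc n y y : ZC Γ Λ).T⟩ : ZC Γ Λ) =
      ziC enc n x y := by
    show (⟨default, 0, mrg (bx x) (ztape ((wrd n x x).map enc))
        (ztape ((wrd n y y).map enc))⟩ : ZC Γ Λ) = ⟨default, 0, ztape ((wrd n x y).map enc)⟩
    congr 1
    funext i
    by_cases hi : i ≤ bx x
    · rw [mrg_left hi]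
      exact (ztape_agree_left enc (by omega : bx x < 3 * (n : ℤ)) hi).symm
    · rw [mrg_right hi]
      exact (ztape_agree_right enc (by omega : (n : ℤ) ≤ bx x) (by omega)).symm
  rw [hmerge] at hg1
  have hgeq := reaches_halt_eq M hg1 hg2 (hHalt x y)
  have : (fz x y).q ∈ Acc := by rw [← hgeq]; exact hgAcc
  exact hxy ((wrd_eval_one_iff n x y).mp ((hAccIff x y).mp this))

/-- The word problem for the free group on two generators cannot be solved in
subquadratic time by a one-tape Turing machine. -/
theorem no_subquadratic_word_problem :
    ¬ ∃ (Γ Λ : Type) (_ : Inhabited Γ) (_ : Inhabited Λ) (_ : Fintype Λ)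
      (enc : Fin 2 × Bool → Γ) (M : Turing.TM0.Machine Γ Λ) (Acc : Set Λ)
      (f : ℕ → ℕ),
      -- the four symbols a, b, a⁻¹, b⁻¹ are distinct and different from the blank
      Function.Injective enc ∧ (∀ x, enc x ≠ default) ∧
      -- f(n) = o(n²)
      (∀ ε : ℝ, 0 < ε → ∃ N : ℕ, ∀ n ≥ N, (f n : ℝ) ≤ ε * (n : ℝ) ^ 2) ∧
      -- the machine, started on the tape containing w with the head at its
      -- first letter, halts within f(|w|) steps, in an accepting state iff w
      -- represents the identity of F₂
      (∀ w : List (Fin 2 × Bool),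
        ∃ m ≤ f w.length, ∃ c : Turing.TM0.Cfg Γ Λ,
          TMsteps M m (Turing.TM0.init (w.map enc)) = some c ∧
          Turing.TM0.step M c = none ∧
          (c.q ∈ Acc ↔ wordEval w = 1)) := by
  exact no_subquadratic_word_problem'
end

section
/- There exist a real number α > 1 and a natural number n₀ such that for every even natural number n there is a finite set 𝒲ₙ of words over the alphabet {a, b, a⁻¹, b⁻¹} (lists over Fin 2 × Bool) with the following properties: (1) every w ∈ 𝒲ₙ has length n and represents the identity element of the free group F₂ on two generators; (2) if n ≥ n₀ then the cardinality of 𝒲ₙ is at least α^n; (3) for every integer t with n/4 ≤ t < n/2, the map sending w ∈ 𝒲ₙ to the element of F₂ represented by the initial subword w.take t is injective on 𝒲ₙ (i.e. the length-t prefixes of distinct words in 𝒲ₙ represent distinct elements of F₂). -/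
lemma wordEval_eq_mk (w : List (Fin 2 × Bool)) : wordEval w = FreeGroup.mk w := by
  induction w with
  | nil => rfl
  | cons p L ih =>
    have hmk : FreeGroup.mk (p :: L) = FreeGroup.mk [p] * FreeGroup.mk L := by
      rw [FreeGroup.mul_mk]; rfl
    have hp : (if p.2 then FreeGroup.of p.1 else (FreeGroup.of p.1)⁻¹) = FreeGroup.mk [p] := by
      rcases p with ⟨x, b⟩
      cases b with
      | true => rfl
      | false =>
        simp only [if_neg Bool.false_ne_true]
        rw [show FreeGroup.of x = FreeGroup.mk [(x, true)] from rfl, FreeGroup.inv_mk]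
        rfl
    simp only [wordEval, List.map_cons, List.prod_cons] at *
    rw [hp, ih, hmk]

/-- A word with all letters positive is reduced. -/
lemma reduce_pos (w : List (Fin 2 × Bool)) (h : ∀ p ∈ w, p.2 = true) :
    FreeGroup.reduce w = w := by
  induction w with
  | nil => rfl
  | cons p L ih =>
    have hL : ∀ q ∈ L, q.2 = true := fun q hq => h q (List.mem_cons_of_mem _ hq)
    rw [FreeGroup.reduce.cons, ih hL]
    cases L with
    | nil => rfl
    | cons q L' =>
      have hq : q.2 = true := hL q List.mem_cons_self
      have hp : p.2 = true := h p List.mem_cons_self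
      have : ¬(p.1 = q.1 ∧ p.2 = !q.2) := by
        rintro ⟨-, h2⟩; rw [hp, hq] at h2; simp at h2
      simp [this]

lemma wordEval_pos_injOn {w1 w2 : List (Fin 2 × Bool)}
    (h1 : ∀ p ∈ w1, p.2 = true) (h2 : ∀ p ∈ w2, p.2 = true)
    (h : wordEval w1 = wordEval w2) : w1 = w2 := by
  rw [wordEval_eq_mk, wordEval_eq_mk] at h
  have := congrArg FreeGroup.toWord h
  rwa [FreeGroup.toWord_mk, FreeGroup.toWord_mk, reduce_pos _ h1, reduce_pos _ h2] at this

/-- The padded positive word of length `m` built from `v` (assuming `v.length ≤ m`). -/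
def padWord (m : ℕ) (v : List (Fin 2)) : List (Fin 2 × Bool) :=
  (v ++ List.replicate (m - v.length) 0).map fun i => (i, true)

/-- The full trivial word. -/
def fullWord (m : ℕ) (v : List (Fin 2)) : List (Fin 2 × Bool) :=
  padWord m v ++ FreeGroup.invRev (padWord m v)

lemma padWord_pos (m : ℕ) (v : List (Fin 2)) : ∀ p ∈ padWord m v, p.2 = true := by
  intro p hp
  simp only [padWord, List.mem_map] at hp
  obtain ⟨i, -, rfl⟩ := hp
  rfl

lemma padWord_length (m : ℕ) (v : List (Fin 2)) (h : v.length ≤ m) :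
    (padWord m v).length = m := by
  simp [padWord, Nat.add_sub_cancel' h]

lemma fullWord_eval (m : ℕ) (v : List (Fin 2)) : wordEval (fullWord m v) = 1 := by
  rw [wordEval_eq_mk, fullWord, ← FreeGroup.mul_mk, ← FreeGroup.inv_mk, mul_inv_cancel]

theorem exists_words_with_distinct_prefixes :
    ∃ (α : ℝ) (n₀ : ℕ), 1 < α ∧
      ∀ n : ℕ, Even n →
        ∃ W : Finset (List (Fin 2 × Bool)),
          (∀ w ∈ W, w.length = n ∧ wordEval w = 1) ∧
          (n₀ ≤ n → (α : ℝ) ^ n ≤ (W.card : ℝ)) ∧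
          (∀ t : ℕ, n / 4 ≤ t → t < n / 2 →
            Set.InjOn (fun w : List (Fin 2 × Bool) => wordEval (w.take t)) ↑W) := by
  refine ⟨(2 : ℝ) ^ ((8 : ℝ)⁻¹), 4, ?_, ?_⟩
  · rw [show (1 : ℝ) = (2 : ℝ) ^ (0 : ℝ) by norm_num]
    exact Real.rpow_lt_rpow_left_iff (by norm_num) |>.mpr (by norm_num)
  intro n hn
  have hn2 : n % 2 = 0 := Nat.even_iff.mp hn
  set m := n / 2 with hm
  set k := n / 4 with hk
  have hkm : k ≤ m := Nat.div_le_div_left (by norm_num) (by norm_num) |>.trans_eq rfl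
  clear_value m k
  -- the set of words
  set W : Finset (List (Fin 2 × Bool)) :=
    (Finset.univ : Finset (Fin k → Fin 2)).image (fun v => fullWord m (List.ofFn v)) with hW
  have hlen : ∀ v : Fin k → Fin 2, (List.ofFn v).length = k := fun v => List.length_ofFn
  have hpadlen : ∀ v : Fin k → Fin 2, (padWord m (List.ofFn v)).length = m :=
    fun v => padWord_length m _ (by rw [hlen v]; exact hkm)
  -- prefix of fullWord
  have htake : ∀ (v : Fin k → Fin 2) (t : ℕ), t ≤ m →
      (fullWord m (List.ofFn v)).take t = (padWord m (List.ofFn v)).take t := by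
    intro v t ht
    rw [fullWord, List.take_append_of_le_length (by rw [hpadlen]; exact ht)]
  -- key injectivity
  have hinj : ∀ (v v' : Fin k → Fin 2) (t : ℕ), k ≤ t → t ≤ m →
      wordEval ((fullWord m (List.ofFn v)).take t) =
      wordEval ((fullWord m (List.ofFn v')).take t) → v = v' := by
    intro v v' t hkt htm h
    rw [htake v t htm, htake v' t htm] at h
    have heq := wordEval_pos_injOn
      (fun p hp => padWord_pos m _ p (List.mem_of_mem_take hp))
      (fun p hp => padWord_pos m _ p (List.mem_of_mem_take hp)) h
    have heq2 := congrArg (fun L => (L.take k).map Prod.fst) heq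
    simp only [List.take_take, min_eq_left hkt] at heq2
    have hv : ∀ (u : Fin k → Fin 2),
        (((padWord m (List.ofFn u)).take k).map Prod.fst) = List.ofFn u := by
      intro u
      rw [padWord, ← List.map_take, List.take_append_of_le_length (by rw [hlen]),
        List.take_of_length_le (by rw [hlen]), List.map_map]
      simp [Function.comp_def]
    rw [hv v, hv v'] at heq2
    exact funext fun i => by
      have := congrArg (fun L => L[(i : ℕ)]?) heq2
      simpa [List.getElem?_ofFn] using this
  have hwinj : Function.Injective (fun v : Fin k → Fin 2 => fullWord m (List.ofFn v)) := by
    intro v v' h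
    have h' : fullWord m (List.ofFn v) = fullWord m (List.ofFn v') := h
    exact hinj v v' k le_rfl hkm (by rw [h'])
  refine ⟨W, ?_, ?_, ?_⟩
  · rintro w hw
    simp only [hW, Finset.mem_image] at hw
    obtain ⟨v, -, rfl⟩ := hw
    constructor
    · rw [fullWord, List.length_append, FreeGroup.invRev_length, hpadlen]
      omega
    · exact fullWord_eval m _
  · intro hn4
    have hcard : W.card = 2 ^ k := by
      rw [hW, Finset.card_image_of_injective _ hwinj, Finset.card_univ]
      simp [Fintype.card_fun]
    rw [hcard]
    have h1 : ((2 : ℝ) ^ ((8 : ℝ)⁻¹)) ^ n = (2 : ℝ) ^ ((n : ℝ) * (8 : ℝ)⁻¹) := by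
      rw [← Real.rpow_natCast ((2 : ℝ) ^ ((8 : ℝ)⁻¹)) n, ← Real.rpow_mul (by norm_num)]
      ring_nf
    have h2 : ((2 : ℝ) ^ k : ℝ) = (2 : ℝ) ^ ((k : ℝ)) := by
      rw [Real.rpow_natCast]
    push_cast
    rw [h1, ← Real.rpow_natCast (2 : ℝ) k]
    apply Real.rpow_le_rpow_left_iff (by norm_num : (1:ℝ) < 2) |>.mpr
    have h8 : n ≤ 8 * k := by rw [hk]; omega
    have h8' : (n : ℝ) ≤ 8 * (k : ℕ) := by exact_mod_cast h8
    linarith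
  · intro t ht1 ht2 w1 hw1 w2 hw2 h
    simp only [Finset.coe_image, Set.mem_image, hW, Finset.mem_coe, Finset.mem_image] at hw1 hw2
    obtain ⟨v, -, rfl⟩ := hw1
    obtain ⟨v', -, rfl⟩ := hw2
    rw [hinj v v' t ht1 (le_of_lt ht2) h]
end
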